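/- Let {D₁,…,Dₘ} be a nontrivial (v,m,k,λ)-SEDF in an abelian group G and let D = D₁ ∪ ⋯ ∪ Dₘ. Then there exists a nonprincipal character χ of G with χ(D) ≠ 0. -/

import Mathlib

open Finset

/-- `{D j}` is a `(v, m, k, lam)`-strong external difference family in the
abelian group `G`: mutually disjoint `k`-subsets whose defining group-ring
identity `D_j · (∑_{i≠j} D_i^{(-1)}) = lam (G - 1)` holds in `ℤ[G]`. -/
def IsSEDF {G : Type} [CommGroup G] [Fintype G] [DecidableEq G]
    (v m k lam : ℕ) (D : Fin m → Finset G) : Prop :=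
  Fintype.card G = v ∧ 2 ≤ m ∧ (∀ i, (D i).card = k) ∧
  (∀ i j, i ≠ j → Disjoint (D i) (D j)) ∧
  ∀ j, (∑ d ∈ D j, MonoidAlgebra.of ℤ G d) *
      (∑ i ∈ Finset.univ.erase j, ∑ d ∈ D i, MonoidAlgebra.of ℤ G d⁻¹)
    = (lam : ℤ) • ((∑ g : G, MonoidAlgebra.of ℤ G g) - 1)


noncomputable def charOf {G : Type} [CommGroup G] (ψ : AddChar (Additive G) ℂ) : G →* ℂ where
  toFun g := ψ (Additive.ofMul g)
  map_one' := ψ.map_zero_eq_one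
  map_mul' _ _ := ψ.map_add_eq_mul _ _

lemma sedf_arith {k m lam : ℕ} (hk : 2 ≤ k) (hm : 2 ≤ m)
    (h : k * ((m - 1) * k) = lam * (m * k - 1)) : False := by
  have hmk : 4 ≤ m * k := Nat.mul_le_mul hm hk
  have hlam : lam ≠ 0 := by
    rintro rfl
    rw [zero_mul] at h
    rcases Nat.mul_eq_zero.mp h with h' | h'
    · omega
    · rcases Nat.mul_eq_zero.mp h' with h'' | h'' <;> omega
  have hdvd : k ∣ lam := by
    have hd1 : k ∣ lam * (m * k - 1) := ⟨(m - 1) * k, h.symm⟩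
    have hcop : Nat.Coprime k (m * k - 1) := by
      have d1 : Nat.gcd k (m * k - 1) ∣ m * k :=
        (Nat.gcd_dvd_left _ _).trans (dvd_mul_left k m)
      have d2 := Nat.gcd_dvd_right k (m * k - 1)
      have d3 : Nat.gcd k (m * k - 1) ∣ 1 := by
        have := Nat.dvd_sub d1 d2
        simpa [show m * k - (m * k - 1) = 1 by omega] using this
      exact Nat.dvd_one.mp d3
    exact hcop.dvd_of_dvd_mul_right hd1
  obtain ⟨t, rfl⟩ := hdvd
  have ht : 1 ≤ t := by
    rcases Nat.eq_zero_or_pos t with rfl | h' <;> omega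
  have hk0 : 0 < k := by omega
  have h2 : (m - 1) * k = t * (m * k - 1) :=
    Nat.eq_of_mul_eq_mul_left hk0 (h.trans (mul_assoc k t _))
  have h3 : m * k - 1 ≤ t * (m * k - 1) := Nat.le_mul_of_pos_left _ ht
  have h4 : (m - 1) * k + k = m * k := by
    have hm1 : m - 1 + 1 = m := by omega
    calc (m - 1) * k + k = (m - 1 + 1) * k := by ring
    _ = m * k := by rw [hm1]
  have h6 : m * k - 1 ≤ (m - 1) * k := h2 ▸ h3
  set a := (m - 1) * k
  set b := m * k
  omega

theorem sedf_exists_nonvanishing_character {G : Type} [CommGroup G] [Fintype G]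
    [DecidableEq G] {v m k lam : ℕ} (D : Fin m → Finset G)
    (h : IsSEDF v m k lam D) (hk : 1 < k) :
    ∃ χ : G →* ℂ, χ ≠ 1 ∧ ∑ d ∈ Finset.univ.biUnion D, χ d ≠ 0 := by
  obtain ⟨hv, hm, hcard, hdisj, heq⟩ := h
  by_contra hcon
  push_neg at hcon
  set S := Finset.univ.biUnion D with hS
  have hk2 : 2 ≤ k := hk
  have hScard : S.card = m * k := by
    rw [hS, Finset.card_biUnion (fun i _ j _ hij => hdisj i j hij)]
    simp [hcard]
  have hv1 : 1 ≤ v := by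
    rw [← hv]; exact Fintype.card_pos
  have hmk4 : 4 ≤ m * k := Nat.mul_le_mul hm hk2
  -- Step 1: all nonprincipal characters vanish on S forces S = univ
  have hSuniv : S = Finset.univ := by
    rw [Finset.eq_univ_iff_forall]
    intro g
    by_contra hg
    have h1 : ∑ ψ : AddChar (Additive G) ℂ, ∑ d ∈ S, ψ (Additive.ofMul (g⁻¹ * d))
        = (S.card : ℂ) := by
      rw [Finset.sum_eq_single_of_mem (0 : AddChar (Additive G) ℂ) (Finset.mem_univ _)]
      · simp
      · intro ψ _ hψ
        have hχ : charOf ψ ≠ 1 := by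
          intro hone
          apply hψ
          ext a
          have : charOf ψ a.toMul = 1 := by rw [hone]; rfl
          simpa [charOf] using this
        have hzero := hcon (charOf ψ) hχ
        calc ∑ d ∈ S, ψ (Additive.ofMul (g⁻¹ * d))
            = ∑ d ∈ S, ψ (Additive.ofMul g⁻¹) * charOf ψ d := by
              refine Finset.sum_congr rfl fun d _ => ?_
              show ψ (Additive.ofMul g⁻¹ + Additive.ofMul d) = _
              rw [ψ.map_add_eq_mul]; rfl
          _ = ψ (Additive.ofMul g⁻¹) * ∑ d ∈ S, charOf ψ d := by rw [Finset.mul_sum]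
          _ = 0 := by rw [hzero, mul_zero]
    have h2 : ∑ ψ : AddChar (Additive G) ℂ, ∑ d ∈ S, ψ (Additive.ofMul (g⁻¹ * d))
        = 0 := by
      rw [Finset.sum_comm]
      rw [Finset.sum_eq_zero]
      intro d hd
      rw [AddChar.sum_apply_eq_ite]
      refine if_neg ?_
      rw [show (0 : Additive G) = Additive.ofMul (1 : G) from rfl,
        Additive.ofMul.apply_eq_iff_eq, inv_mul_eq_one]
      rintro rfl; exact hg hd
    rw [h1] at h2
    have hne : (S.card : ℂ) ≠ 0 := Nat.cast_ne_zero.mpr (by omega)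
    exact hne h2
  have hveq : v = m * k := by
    rw [← hv, ← Finset.card_univ, ← hSuniv, hScard]
  -- Step 2: augmentation map applied to the SEDF equation
  have hm0 : 0 < m := by omega
  have e := congrArg (MonoidAlgebra.lift ℤ ℤ G 1) (heq ⟨0, hm0⟩)
  simp only [zsmul_eq_mul, map_mul, map_sub, map_one, map_sum, map_intCast,
    MonoidAlgebra.lift_of, MonoidHom.one_apply, Finset.sum_const, nsmul_eq_mul,
    mul_one, Finset.card_univ, hcard, Fintype.card_fin,
    Finset.card_erase_of_mem (Finset.mem_univ _)] at e
  -- e : (k:ℤ) * ((m-1) * k) = lam * (card G - 1)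
  rw [hv] at e
  have eN : k * ((m - 1) * k) = lam * (v - 1) := by
    have h' : ((k * ((m - 1) * k) : ℕ) : ℤ) = ((lam * (v - 1) : ℕ) : ℤ) := by
      push_cast [Nat.cast_sub (show 1 ≤ m by omega)] at e
      push_cast [Nat.cast_sub hv1, Nat.cast_sub (show 1 ≤ m by omega)]
      linear_combination e
    exact_mod_cast h'
  rw [hveq] at eN
  exact sedf_arith hk2 hm eN
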